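/- Let r ∈ [0, 1) and for each i ∈ ℕ define real numbers N_{i,t} by N_{i,0} = 0 and, for t ≥ 1, N_{i,t} = r N_{i,t-1} + 1/t if i < t and N_{i,t} = r N_{i,t-1} otherwise. Then for all integers i, t with 1 ≤ i < t and t ≤ 2/(1−r), one has N_{i,t} ≤ log(2/(i(1−r))). -/

import Mathlib

/-- **Constant bound on the IGT scalar noise coefficients.** For `r ∈ [0,1)` and the recursion
`N i 0 = 0`, `N i t = r N i (t-1) + 1/t` if `i < t` and `N i t = r N i (t-1)` otherwise:
for all integers `1 ≤ i < t` with `t ≤ 2/(1-r)`, one has `N i t ≤ log (2/(i (1-r)))`. -/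
theorem igt_noise_coeff_constant_bound
    (r : ℝ) (hr0 : 0 ≤ r) (hr1 : r < 1)
    (N : ℕ → ℕ → ℝ)
    (hN0 : ∀ i, N i 0 = 0)
    (hN : ∀ i t : ℕ, 1 ≤ t → N i t =
      if i < t then r * N i (t - 1) + 1 / (t : ℝ) else r * N i (t - 1)) :
    ∀ i t : ℕ, 1 ≤ i → i < t → (t : ℝ) ≤ 2 / (1 - r) →
      N i t ≤ Real.log (2 / ((i : ℝ) * (1 - r))) := by
  -- N i t = 0 for t ≤ i
  have hzero : ∀ i t : ℕ, t ≤ i → N i t = 0 := by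
    intro i t
    induction t with
    | zero => intro _; exact hN0 i
    | succ s ih =>
      intro hle
      rw [hN i (s+1) (Nat.le_add_left 1 s)]
      have : ¬ i < s + 1 := by omega
      simp [this, ih (by omega)]
  -- N i t ≥ 0
  have hnn : ∀ i t : ℕ, 0 ≤ N i t := by
    intro i t
    induction t with
    | zero => rw [hN0]
    | succ s ih =>
      rw [hN i (s+1) (Nat.le_add_left 1 s)]
      split
      · positivity
      · positivity
  -- main induction: for 1 ≤ i ≤ t, N i t ≤ log t - log i
  have hmain : ∀ i : ℕ, 1 ≤ i → ∀ t : ℕ, i ≤ t →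
      N i t ≤ Real.log t - Real.log i := by
    intro i hi t ht
    induction t, ht using Nat.le_induction with
    | base => rw [hzero i i le_rfl]; simp
    | succ t ht ih =>
      rw [hN i (t+1) (Nat.le_add_left 1 t)]
      have hlt : i < t + 1 := by omega
      simp only [hlt, if_true, Nat.add_sub_cancel]
      have hrN : r * N i t ≤ N i t := by
        nlinarith [hnn i t]
      have htpos : (0:ℝ) < t := by exact_mod_cast (by omega : 0 < t)
      have ht1pos : (0:ℝ) < (t:ℝ) + 1 := by linarith
      have hlog : 1 / ((t:ℝ) + 1) ≤ Real.log ((t:ℝ)+1) - Real.log t := by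
        have h1 : Real.log ((t:ℝ) / ((t:ℝ)+1)) ≤ (t:ℝ) / ((t:ℝ)+1) - 1 :=
          Real.log_le_sub_one_of_pos (by positivity)
        rw [Real.log_div (ne_of_gt htpos) (ne_of_gt ht1pos)] at h1
        have h2 : (t:ℝ) / ((t:ℝ)+1) - 1 = -(1 / ((t:ℝ)+1)) := by
          field_simp
          ring
        linarith [h1, h2 ▸ h1]
      have hcast : ((t+1 : ℕ) : ℝ) = (t:ℝ) + 1 := by push_cast; ring
      rw [hcast]
      linarith
  intro i t hi hit ht2
  have hipos : (0:ℝ) < i := by exact_mod_cast hi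
  have htpos : (0:ℝ) < t := by exact_mod_cast (by omega : 0 < t)
  have h1r : (0:ℝ) < 1 - r := by linarith
  have hlogt : Real.log t ≤ Real.log (2 / (1 - r)) :=
    Real.log_le_log htpos ht2
  have heq : Real.log (2 / ((i:ℝ) * (1 - r))) = Real.log (2 / (1 - r)) - Real.log i := by
    rw [show (2:ℝ) / ((i:ℝ) * (1 - r)) = (2 / (1 - r)) / i by field_simp,
      Real.log_div (by positivity) (ne_of_gt hipos)]
  rw [heq]
  have := hmain i hi t (le_of_lt hit)
  linarith
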